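/- For every integer k ≥ 0, Σ_{j=0}^{k} a_{2j}^2 = (2k+1) a_{2k} b_{2k}, where a_{2j} := 2^{-2j} C(2j, j) and b_{2k} := 2^{-2k} Σ_{j=0}^{k} C(2k+1, j)/(2k+1-2j). -/

import Mathlib

/-- `a n = binomial(n, n/2) / 2^n` as a rational number. -/
noncomputable def a (n : ℕ) : ℚ := (n.choose (n / 2) : ℚ) / 2 ^ n

/-- `b n = 2^{-n} Σ_{j=0}^{n/2} C(n+1,j)/(n+1-2j)` as a rational number. -/
noncomputable def b (n : ℕ) : ℚ :=
  (1 / 2 ^ n) * ∑ j ∈ Finset.range (n / 2 + 1),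
    ((n + 1).choose j : ℚ) / ((n : ℚ) + 1 - 2 * j)

noncomputable def c (k : ℕ) : ℚ :=
  ∑ j ∈ Finset.range (k + 1), ((2 * k + 1).choose j : ℚ) / (2 * (k : ℚ) + 1 - 2 * j)

lemma row (n j : ℕ) (h : j ≤ n + 1) :
    ((n + 1).choose j : ℚ) * ((n : ℚ) + 1 - j) = ((n : ℚ) + 1) * (n.choose j : ℚ) := by
  have h1 := Nat.choose_mul_succ_eq n j
  have h2 : ((n + 1 - j : ℕ) : ℚ) = (n : ℚ) + 1 - j := by
    push_cast [Nat.cast_sub h]; ring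
  have h3 := congrArg (fun x : ℕ => (x : ℚ)) h1
  simp only [Nat.cast_mul] at h3
  rw [h2] at h3
  push_cast at h3 ⊢
  linarith [h3]

lemma col (n j : ℕ) :
    (n.choose (j + 1) : ℚ) * ((j : ℚ) + 1) = (n.choose j : ℚ) * ((n : ℚ) - j) := by
  rcases le_or_gt j n with h | h
  · have h1 := Nat.choose_succ_right_eq n j
    have h2 : ((n - j : ℕ) : ℚ) = (n : ℚ) - j := by push_cast [Nat.cast_sub h]; ring
    have h3 := congrArg (fun x : ℕ => (x : ℚ)) h1
    simp only [Nat.cast_mul] at h3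
    rw [h2] at h3
    push_cast at h3 ⊢
    linarith [h3]
  · rw [Nat.choose_eq_zero_of_lt h, Nat.choose_eq_zero_of_lt (Nat.lt_succ_of_lt h)]
    simp

noncomputable def g (k j : ℕ) : ℚ :=
  -(((2 * k + 3).choose j : ℚ)) * j * (6 * (k : ℚ) + 9 - 2 * j) /
    ((2 * (k : ℚ) + 3 - 2 * j) * (2 * (k : ℚ) + 3))

set_option maxHeartbeats 1600000 in
lemma per_term (k j : ℕ) (hj : j ≤ k) :
    (2 * (k : ℚ) + 3) * (((2 * k + 3).choose j : ℚ) / (2 * (k : ℚ) + 3 - 2 * j))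
      = 8 * ((k : ℚ) + 1) * (((2 * k + 1).choose j : ℚ) / (2 * (k : ℚ) + 1 - 2 * j))
        + (g k (j + 1) - g k j) := by
  have hjq : (j : ℚ) ≤ k := by exact_mod_cast hj
  have d1 : (0 : ℚ) < 2 * k + 1 - 2 * j := by linarith
  have d2 : (0 : ℚ) < 2 * k + 3 - 2 * j := by linarith
  have d2' : (0 : ℚ) < 2 * k + 3 - 2 * (j + 1 : ℕ) := by push_cast; linarith
  have d3 : (0 : ℚ) < 2 * k + 3 := by positivity
  have d4 : (0 : ℚ) < 2 * k + 3 - j := by linarith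
  have d5 : (0 : ℚ) < 2 * k + 2 - j := by linarith
  have d6 : (0 : ℚ) < (j : ℚ) + 1 := by positivity
  have f1 : ((2 * k + 3).choose j : ℚ) * (2 * (k : ℚ) + 3 - j)
      = (2 * (k : ℚ) + 3) * ((2 * k + 2).choose j : ℚ) := by
    have h := row (2 * k + 2) j (by omega)
    push_cast at h ⊢
    linarith [h]
  have f2 : ((2 * k + 2).choose j : ℚ) * (2 * (k : ℚ) + 2 - j)
      = (2 * (k : ℚ) + 2) * ((2 * k + 1).choose j : ℚ) := by
    have h := row (2 * k + 1) j (by omega)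
    push_cast at h ⊢
    linarith [h]
  have f3 : ((2 * k + 3).choose (j + 1) : ℚ) * ((j : ℚ) + 1)
      = ((2 * k + 3).choose j : ℚ) * (2 * (k : ℚ) + 3 - j) := by
    have h := col (2 * k + 3) j
    push_cast at h ⊢
    linarith [h]
  have hM : ((2 * k + 2).choose j : ℚ)
      = (2 * (k : ℚ) + 2) * ((2 * k + 1).choose j : ℚ) / (2 * (k : ℚ) + 2 - j) := by
    rw [eq_div_iff (ne_of_gt d5)]; linarith [f2]
  have hB : ((2 * k + 3).choose j : ℚ)
      = (2 * (k : ℚ) + 3) * ((2 * k + 2).choose j : ℚ) / (2 * (k : ℚ) + 3 - j) := by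
    rw [eq_div_iff (ne_of_gt d4)]; linarith [f1]
  have hB' : ((2 * k + 3).choose (j + 1) : ℚ)
      = ((2 * k + 3).choose j : ℚ) * (2 * (k : ℚ) + 3 - j) / ((j : ℚ) + 1) := by
    rw [eq_div_iff (ne_of_gt d6)]; linarith [f3]
  have hgj1 : g k (j + 1)
      = -(((2 * k + 3).choose (j + 1) : ℚ)) * ((j : ℚ) + 1) * (6 * (k : ℚ) + 7 - 2 * j)
        / ((2 * (k : ℚ) + 1 - 2 * j) * (2 * (k : ℚ) + 3)) := by
    unfold g
    push_cast
    congr 1 <;> ring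
  have n1 : (2 * (k : ℚ) + 1 - 2 * j) ≠ 0 := ne_of_gt d1
  have n2 : (2 * (k : ℚ) + 3 - 2 * j) ≠ 0 := ne_of_gt d2
  have n3 : (2 * (k : ℚ) + 3) ≠ 0 := ne_of_gt d3
  have n4 : (2 * (k : ℚ) + 3 - j) ≠ 0 := ne_of_gt d4
  have n5 : (2 * (k : ℚ) + 2 - j) ≠ 0 := ne_of_gt d5
  have n6 : ((j : ℚ) + 1) ≠ 0 := ne_of_gt d6
  rw [hgj1]
  unfold g
  rw [hB', hB, hM]
  have n5' : 2 * ((k : ℚ) + 1) - j ≠ 0 := by linarith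
  field_simp
  ring

lemma c_rec (k : ℕ) :
    (2 * (k : ℚ) + 3) * c (k + 1)
      = 8 * ((k : ℚ) + 1) * c k + ((2 * k + 2).choose (k + 1) : ℚ) := by
  have hck1 : c (k + 1) = ∑ j ∈ Finset.range (k + 2),
      ((2 * k + 3).choose j : ℚ) / (2 * (k : ℚ) + 3 - 2 * j) := by
    unfold c
    refine Finset.sum_congr rfl fun j _ => ?_
    have hn : 2 * (k + 1) + 1 = 2 * k + 3 := by ring
    rw [hn]
    congr 1
    push_cast; ring
  have key : (2 * (k : ℚ) + 3) * c (k + 1)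
      - 8 * ((k : ℚ) + 1) * c k
      - (2 * (k : ℚ) + 3) * (((2 * k + 3).choose (k + 1) : ℚ)
          / (2 * (k : ℚ) + 3 - 2 * ((k : ℚ) + 1)))
      = g k (k + 1) - g k 0 := by
    rw [← Finset.sum_range_sub (g k) (k + 1)]
    rw [hck1]
    unfold c
    rw [Finset.mul_sum, Finset.mul_sum, Finset.sum_range_succ]
    have e1 : ∀ j ∈ Finset.range (k + 1),
        (2 * (k : ℚ) + 3) * (((2 * k + 3).choose j : ℚ) / (2 * (k : ℚ) + 3 - 2 * j))
        = 8 * ((k : ℚ) + 1) * (((2 * k + 1).choose j : ℚ) / (2 * (k : ℚ) + 1 - 2 * j))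
          + (g k (j + 1) - g k j) := by
      intro j hj
      exact per_term k j (Nat.lt_succ_iff.mp (Finset.mem_range.mp hj))
    rw [Finset.sum_congr rfl e1, Finset.sum_add_distrib]
    push_cast
    ring
  have hg0 : g k 0 = 0 := by unfold g; simp
  have hgk : g k (k + 1)
      = -(((2 * k + 3).choose (k + 1) : ℚ)) * ((k : ℚ) + 1) * (4 * (k : ℚ) + 7)
        / (2 * (k : ℚ) + 3) := by
    unfold g
    push_cast
    have h1 : 2 * (k : ℚ) + 3 - 2 * ((k : ℚ) + 1) = 1 := by ring
    rw [h1]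
    ring_nf
  have frow : ((2 * k + 3).choose (k + 1) : ℚ) * ((k : ℚ) + 2)
      = (2 * (k : ℚ) + 3) * ((2 * k + 2).choose (k + 1) : ℚ) := by
    have h := row (2 * k + 2) (k + 1) (by omega)
    push_cast at h ⊢
    linarith [h]
  have d3 : (2 * (k : ℚ) + 3) ≠ 0 := by positivity
  have h1 : 2 * (k : ℚ) + 3 - 2 * ((k : ℚ) + 1) = 1 := by ring
  rw [h1, div_one, hg0, sub_zero, hgk] at key
  have final : (2 * (k : ℚ) + 3) * ((2 * k + 3).choose (k + 1) : ℚ)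
      + (-(((2 * k + 3).choose (k + 1) : ℚ)) * ((k : ℚ) + 1) * (4 * (k : ℚ) + 7)
        / (2 * (k : ℚ) + 3))
      = ((2 * k + 2).choose (k + 1) : ℚ) := by
    field_simp
    linear_combination frow
  linear_combination key + final

lemma a_eq (k : ℕ) : a (2 * k) = ((2 * k).choose k : ℚ) / 4 ^ k := by
  unfold a
  have h : 2 * k / 2 = k := Nat.mul_div_cancel_left k (by norm_num)
  rw [h]
  congr 1
  rw [pow_mul]; norm_num

lemma b_eq (k : ℕ) : b (2 * k) = c k / 4 ^ k := by
  unfold b c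
  have h : 2 * k / 2 = k := Nat.mul_div_cancel_left k (by norm_num)
  rw [h]
  have h2 : ((2 : ℚ)) ^ (2 * k) = 4 ^ k := by rw [pow_mul]; norm_num
  rw [h2]
  have hsum : ∑ j ∈ Finset.range (k + 1),
        (((2 * k) + 1).choose j : ℚ) / (((2 * k : ℕ) : ℚ) + 1 - 2 * j)
      = ∑ j ∈ Finset.range (k + 1),
        ((2 * k + 1).choose j : ℚ) / (2 * (k : ℚ) + 1 - 2 * j) := by
    refine Finset.sum_congr rfl fun j _ => ?_
    congr 1
    push_cast; ring
  rw [hsum]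
  ring

theorem stmt_3 (k : ℕ) :
    ∑ j ∈ Finset.range (k + 1), (a (2 * j)) ^ 2 = (2 * (k : ℚ) + 1) * a (2 * k) * b (2 * k) := by
  induction k with
  | zero =>
    simp [a, b]
  | succ k ih =>
    rw [Finset.sum_range_succ, ih]
    rw [a_eq, a_eq, b_eq, b_eq]
    set D := ((2 * k).choose k : ℚ) with hD
    set E := ((2 * (k + 1)).choose (k + 1) : ℚ) with hE0
    have hEe : E = ((2 * k + 2).choose (k + 1) : ℚ) := by
      rw [hE0]; norm_num [show 2 * (k + 1) = 2 * k + 2 from by ring]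
    have hrec := c_rec k
    have hk1 : ((k : ℚ) + 1) ≠ 0 := by positivity
    have r2 : ((2 * k + 2).choose (k + 1) : ℚ) * ((k : ℚ) + 1)
        = (2 * (k : ℚ) + 2) * ((2 * k + 1).choose k : ℚ) := by
      have h1 := Nat.add_one_mul_choose_eq (2 * k + 1) k
      have h3 := congrArg (fun x : ℕ => (x : ℚ)) h1
      push_cast at h3 ⊢
      linarith [h3]
    have r1' : ((2 * k + 1).choose k : ℚ) * ((k : ℚ) + 1)
        = (2 * (k : ℚ) + 1) * D := by
      have h := row (2 * k) k (by omega)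
      push_cast at h ⊢
      linear_combination h
    have hc : E * ((k : ℚ) + 1) ^ 2
        = (2 * (k : ℚ) + 2) * (2 * (k : ℚ) + 1) * D := by
      rw [hEe]
      linear_combination ((k : ℚ) + 1) * r2 + (2 * (k : ℚ) + 2) * r1'
    have hE2 : ((k : ℚ) + 1) * E = 2 * (2 * (k : ℚ) + 1) * D := by
      apply mul_left_cancel₀ hk1
      linear_combination hc
    have key3 : 16 * (2 * (k : ℚ) + 1) * D * c k + E ^ 2
        = (2 * (k : ℚ) + 3) * E * c (k + 1) := by
      rw [hEe] at hE2 ⊢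
      linear_combination (-(((2 * k + 2).choose (k + 1) : ℚ))) * hrec
        + (-8 * c k) * hE2
    have hP : ((4 : ℚ) ^ k) ≠ 0 := by positivity
    have h4 : ((4 : ℚ)) ^ (k + 1) = 4 * 4 ^ k := by ring
    rw [h4]
    have e1 : (2 * (k : ℚ) + 1) * (D / 4 ^ k) * (c k / 4 ^ k)
        = (16 * (2 * (k : ℚ) + 1) * D * c k) / (16 * (4 ^ k) ^ 2) := by
      field_simp
    have e2 : (E / (4 * 4 ^ k)) ^ 2 = E ^ 2 / (16 * ((4 : ℚ) ^ k) ^ 2) := by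
      rw [div_pow, show ((4:ℚ) * 4 ^ k) ^ 2 = 16 * ((4 : ℚ) ^ k) ^ 2 from by ring]
    have e3 : (2 * ((k : ℚ) + 1) + 1) * (E / (4 * 4 ^ k)) * (c (k + 1) / (4 * 4 ^ k))
        = ((2 * (k : ℚ) + 3) * E * c (k + 1)) / (16 * ((4 : ℚ) ^ k) ^ 2) := by
      field_simp; ring
    push_cast
    rw [e1, e2, e3, ← add_div, key3]
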